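/- arXiv:2205.08795 — 2 statements merged into one kernel-verified Lean document; each statement's English description precedes it below -/
import Mathlib

section
/- For every prime number p and every integer k ≥ 1, the group-annihilator graph Γ(ℤ/p^kℤ) is a threshold graph. -/
/-- The `a`-annihilator of the abelian group `G` (viewed as a `ℤ`-module):
`[a : G] = {x ∈ ℤ : x•G ⊆ ℤ•a}`. -/
def annIdeal (G : Type*) [AddCommGroup G] (a : G) : Set ℤ :=
  {x : ℤ | ∀ g : G, ∃ m : ℤ, x • g = m • a}

/-- The group-annihilator graph `Γ(G)`: vertices are the elements of `G`, and distinct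
`a`, `b` are adjacent iff `[a : G]·[b : G]·G = {0}`. -/
def grpAnnGraph (G : Type*) [AddCommGroup G] : SimpleGraph G where
  Adj a b := a ≠ b ∧ ∀ x ∈ annIdeal G a, ∀ y ∈ annIdeal G b, ∀ g : G, (x * y) • g = 0
  symm := ⟨by
    rintro a b ⟨hne, h⟩
    refine ⟨hne.symm, fun y hy x hx g => ?_⟩
    rw [mul_comm]
    exact h x hx y hy g⟩
  loopless := ⟨fun a h => h.1 rfl⟩

/-- A simple graph on a (necessarily finite) vertex type is a threshold graph if its
vertices admit an enumeration `v_1, …, v_n` such that each `v_i` is adjacent either to all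
of the previous vertices or to none of them. -/
def IsThreshold {V : Type*} (Γ : SimpleGraph V) : Prop :=
  ∃ e : Fin (Nat.card V) ≃ V,
    ∀ i : Fin (Nat.card V),
      (∀ j, j < i → Γ.Adj (e j) (e i)) ∨ (∀ j, j < i → ¬ Γ.Adj (e j) (e i))

lemma mem_annIdeal_iff {n : ℕ} {a : ZMod n} {x : ℤ} :
    x ∈ annIdeal (ZMod n) a ↔ ∃ c : ZMod n, (x : ZMod n) = c * a := by
  constructor
  · intro h
    obtain ⟨m, hm⟩ := h 1
    refine ⟨(m : ZMod n), ?_⟩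
    simpa [zsmul_eq_mul] using hm
  · rintro ⟨c, hc⟩ g
    obtain ⟨m, hm⟩ := ZMod.intCast_surjective (n := n) (c * g)
    refine ⟨m, ?_⟩
    rw [zsmul_eq_mul, zsmul_eq_mul, hc, hm]
    ring

lemma grpAnnGraph_adj_iff {n : ℕ} [NeZero n] {a b : ZMod n} :
    (grpAnnGraph (ZMod n)).Adj a b ↔ a ≠ b ∧ a * b = 0 := by
  constructor
  · rintro ⟨hne, h⟩
    refine ⟨hne, ?_⟩
    have hx : ((a.val : ℤ)) ∈ annIdeal (ZMod n) a := by
      rw [mem_annIdeal_iff]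
      exact ⟨1, by simp [ZMod.natCast_val, ZMod.cast_id]⟩
    have hy : ((b.val : ℤ)) ∈ annIdeal (ZMod n) b := by
      rw [mem_annIdeal_iff]
      exact ⟨1, by simp [ZMod.natCast_val, ZMod.cast_id]⟩
    have := h _ hx _ hy 1
    rw [zsmul_eq_mul, mul_one] at this
    push_cast [ZMod.natCast_val, ZMod.cast_id] at this
    exact this
  · rintro ⟨hne, hab⟩
    refine ⟨hne, ?_⟩
    intro x hx y hy g
    rw [mem_annIdeal_iff] at hx hy
    obtain ⟨c, hc⟩ := hx
    obtain ⟨d, hd⟩ := hy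
    rw [zsmul_eq_mul, Int.cast_mul, hc, hd]
    have : c * a * (d * b) * g = c * d * g * (a * b) := by ring
    rw [this, hab, mul_zero]

/-- The `p`-adic weight of an element of `ZMod (p^k)`, capped at `k`. -/
noncomputable def zwt (p k : ℕ) (a : ZMod (p ^ k)) : ℕ :=
  if a = 0 then k else min k (a.val.factorization p)

lemma zwt_le (p k : ℕ) (a : ZMod (p ^ k)) : zwt p k a ≤ k := by
  unfold zwt; split <;> omega

lemma mul_eq_zero_iff_zwt (p k : ℕ) (hp : p.Prime) [NeZero (p ^ k)] (a b : ZMod (p ^ k)) :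
    a * b = 0 ↔ k ≤ zwt p k a + zwt p k b := by
  by_cases ha : a = 0
  · subst ha
    simp [zwt, zero_mul]
  by_cases hb : b = 0
  · subst hb
    simp [zwt, mul_zero]
  have hva : a.val ≠ 0 := fun h => ha (by rwa [← ZMod.val_eq_zero])
  have hvb : b.val ≠ 0 := fun h => hb (by rwa [← ZMod.val_eq_zero])
  have h1 : a * b = ((a.val * b.val : ℕ) : ZMod (p ^ k)) := by
    push_cast [ZMod.natCast_val, ZMod.cast_id]
    ring
  have h2 : a * b = 0 ↔ p ^ k ∣ a.val * b.val := by
    rw [h1, ZMod.natCast_eq_zero_iff]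
  have h3 : p ^ k ∣ a.val * b.val ↔ k ≤ (a.val * b.val).factorization p :=
    Nat.Prime.pow_dvd_iff_le_factorization hp (Nat.mul_ne_zero hva hvb)
  have h4 : (a.val * b.val).factorization p =
      a.val.factorization p + b.val.factorization p := by
    rw [Nat.factorization_mul hva hvb]; rfl
  rw [h2, h3, h4, zwt, zwt, if_neg ha, if_neg hb]
  omega

/-- For every prime `p` and `k ≥ 1`, the group-annihilator graph
`Γ(ℤ/p^kℤ)` is a threshold graph. -/
theorem grpAnnGraph_isThreshold (p k : ℕ) (hp : p.Prime) (hk : 1 ≤ k) :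
    IsThreshold (grpAnnGraph (ZMod (p ^ k))) := by
  haveI : NeZero (p ^ k) := ⟨pow_ne_zero k hp.pos.ne'⟩
  set V := ZMod (p ^ k)
  set N := Nat.card V
  let e0 : Fin N ≃ V := (Finite.equivFin V).symm
  let w : V → ℕ := zwt p k
  let κ : V → ℕ := fun a => min (w a) (k - w a)
  let f : Fin N → ℕ ×ₗ ℕ := fun i => toLex (k - κ (e0 i), w (e0 i))
  let σ := Tuple.sort f
  refine ⟨σ.trans e0, fun i => ?_⟩
  have hmono : ∀ j : Fin N, j < i →
      k - κ (e0 (σ j)) < k - κ (e0 (σ i)) ∨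
        k - κ (e0 (σ j)) = k - κ (e0 (σ i)) ∧ w (e0 (σ j)) ≤ w (e0 (σ i)) := by
    intro j hj
    have := Tuple.monotone_sort f (le_of_lt hj)
    simpa [f, Prod.Lex.le_iff] using this
  by_cases h2 : k ≤ 2 * w (e0 (σ i))
  · left
    intro j hj
    rw [Equiv.trans_apply, Equiv.trans_apply, grpAnnGraph_adj_iff]
    constructor
    · exact fun h => (Fin.ne_of_lt hj) (σ.injective (e0.injective h))
    · rw [mul_eq_zero_iff_zwt p k hp]
      have hlex := hmono j hj
      have hwj := zwt_le p k (e0 (σ j))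
      have hwi := zwt_le p k (e0 (σ i))
      have hκj : κ (e0 (σ j)) = min (w (e0 (σ j))) (k - w (e0 (σ j))) := rfl
      have hκi : κ (e0 (σ i)) = min (w (e0 (σ i))) (k - w (e0 (σ i))) := rfl
      show k ≤ w (e0 (σ j)) + w (e0 (σ i))
      omega
  · right
    intro j hj hadj
    rw [Equiv.trans_apply, Equiv.trans_apply, grpAnnGraph_adj_iff,
      mul_eq_zero_iff_zwt p k hp] at hadj
    have hsum : k ≤ w (e0 (σ j)) + w (e0 (σ i)) := hadj.2
    have hlex := hmono j hj
    have hwj := zwt_le p k (e0 (σ j))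
    have hwi := zwt_le p k (e0 (σ i))
    have hκj : κ (e0 (σ j)) = min (w (e0 (σ j))) (k - w (e0 (σ j))) := rfl
    have hκi : κ (e0 (σ i)) = min (w (e0 (σ i))) (k - w (e0 (σ i))) := rfl
    omega
end

section
/- Let p be any prime number and k ≥ 1. Every eigenvalue of the Laplacian matrix of the group-annihilator graph Γ(ℤ/p^kℤ) belongs to the set {0} ∪ {p^i : 0 ≤ i ≤ k}; moreover, 0 and p^k are eigenvalues of this Laplacian matrix. -/
open Classical in
/-- The Laplacian matrix `D - A` of a finite simple graph: diagonal entries are the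
vertex degrees, off-diagonal entries are `-1` for adjacent pairs and `0` otherwise. -/
noncomputable def lapMat {V : Type*} [Fintype V] [DecidableEq V] (Γ : SimpleGraph V) :
    Matrix V V ℝ :=
  Matrix.of fun a b =>
    if a = b then ((Γ.neighborSet a).ncard : ℝ) else if Γ.Adj a b then -1 else 0


set_option linter.unusedSectionVars false

namespace LapAux
open Finset Matrix

variable (p k : ℕ) [hp : Fact p.Prime]

noncomputable def dd (a : ZMod (p ^ k)) : ℕ := padicValNat p ((ZMod.val a).gcd (p ^ k))

variable [hp : Fact p.Prime]

lemma pow_dd (a : ZMod (p ^ k)) : p ^ dd p k a = (ZMod.val a).gcd (p ^ k) := by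
  obtain ⟨m, hm, he⟩ := (Nat.dvd_prime_pow hp.out).1 (Nat.gcd_dvd_right (ZMod.val a) (p ^ k))
  rw [dd, he, padicValNat.prime_pow]

lemma dd_le (a : ZMod (p ^ k)) : dd p k a ≤ k := by
  have h : p ^ dd p k a ∣ p ^ k := by
    rw [pow_dd]; exact Nat.gcd_dvd_right _ _
  exact (Nat.pow_dvd_pow_iff_le_right hp.out.one_lt).1 h

lemma pow_dd_dvd_val (a : ZMod (p ^ k)) : p ^ dd p k a ∣ ZMod.val a := by
  rw [pow_dd]; exact Nat.gcd_dvd_left _ _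

lemma dvd_val_iff {t : ℕ} (ht : t ≤ k) (a : ZMod (p ^ k)) :
    p ^ t ∣ ZMod.val a ↔ t ≤ dd p k a := by
  constructor
  · intro h
    have h2 : p ^ t ∣ p ^ dd p k a := by
      rw [pow_dd]; exact Nat.dvd_gcd h (pow_dvd_pow p ht)
    exact (Nat.pow_dvd_pow_iff_le_right hp.out.one_lt).1 h2
  · intro h
    exact (pow_dvd_pow p h).trans (pow_dd_dvd_val p k a)

lemma dd_zero [NeZero (p ^ k)] : dd p k (0 : ZMod (p ^ k)) = k := by
  rw [dd, ZMod.val_zero, Nat.gcd_zero_left, padicValNat.prime_pow]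

lemma dd_surj [NeZero (p ^ k)] {i : ℕ} (hi : i ≤ k) : ∃ a : ZMod (p ^ k), dd p k a = i := by
  rcases eq_or_lt_of_le hi with rfl | hlt
  · exact ⟨0, dd_zero _ _⟩
  · refine ⟨((p ^ i : ℕ) : ZMod (p ^ k)), ?_⟩
    have hval : ZMod.val ((p ^ i : ℕ) : ZMod (p ^ k)) = p ^ i := by
      rw [ZMod.val_natCast_of_lt]
      exact Nat.pow_lt_pow_right hp.out.one_lt hlt
    rw [dd, hval, Nat.gcd_eq_left (pow_dvd_pow p hi), padicValNat.prime_pow]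


lemma mem_annIdeal_iff [NeZero (p ^ k)] (a : ZMod (p ^ k)) (x : ℤ) :
    x ∈ annIdeal (ZMod (p ^ k)) a ↔ ((p : ℤ) ^ dd p k a) ∣ x := by
  haveI : NeZero (p ^ dd p k a) := ⟨pow_ne_zero _ hp.out.ne_zero⟩
  constructor
  · intro h
    obtain ⟨m, hm⟩ := h 1
    rw [zsmul_eq_mul, mul_one, zsmul_eq_mul] at hm
    have hdvd : p ^ dd p k a ∣ p ^ k := pow_dvd_pow p (dd_le p k a)
    set f := ZMod.castHom hdvd (ZMod (p ^ dd p k a)) with hf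
    have hfa : f a = 0 := by
      rw [ZMod.castHom_apply, ← ZMod.natCast_val a,
        ZMod.natCast_eq_zero_iff]
      exact pow_dd_dvd_val p k a
    have h0 : ((x : ℤ) : ZMod (p ^ dd p k a)) = 0 := by
      have := congrArg f hm
      rw [map_intCast, _root_.map_mul, map_intCast, hfa, mul_zero] at this
      exact this
    have := (ZMod.intCast_zmod_eq_zero_iff_dvd x (p ^ dd p k a)).1 h0
    exact_mod_cast this
  · rintro ⟨x', rfl⟩
    intro g
    have hb : ∃ c : ZMod (p ^ k), ((p ^ dd p k a : ℕ) : ZMod (p ^ k)) = c * a := by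
      have hbez := Nat.gcd_eq_gcd_ab (ZMod.val a) (p ^ k)
      refine ⟨((Nat.gcdA (ZMod.val a) (p ^ k) : ℤ) : ZMod (p ^ k)), ?_⟩
      have hva : ((ZMod.val a : ℕ) : ZMod (p ^ k)) = a := ZMod.natCast_rightInverse a
      calc ((p ^ dd p k a : ℕ) : ZMod (p ^ k))
          = (((ZMod.val a).gcd (p ^ k) : ℤ) : ZMod (p ^ k)) := by
            rw [pow_dd]; push_cast; ring
        _ = ((((ZMod.val a) : ℤ) * Nat.gcdA (ZMod.val a) (p ^ k) +
              ((p ^ k : ℕ) : ℤ) * Nat.gcdB (ZMod.val a) (p ^ k) : ℤ) : ZMod (p ^ k)) := by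
              rw [← hbez]
        _ = ((Nat.gcdA (ZMod.val a) (p ^ k) : ℤ) : ZMod (p ^ k)) * a := by
              have hps : ((p : ZMod (p ^ k)))^k = 0 := by
                have := ZMod.natCast_self (p ^ k); push_cast at this; exact this
              push_cast
              linear_combination ((Nat.gcdB (ZMod.val a) (p ^ k) : ℤ) : ZMod (p ^ k)) * hps
                + ((Nat.gcdA (ZMod.val a) (p ^ k) : ℤ) : ZMod (p ^ k)) * hva
    obtain ⟨c, hc⟩ := hb
    set y : ZMod (p ^ k) := (x' : ZMod (p ^ k)) * c * g with hy
    refine ⟨(ZMod.val y : ℤ), ?_⟩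
    rw [zsmul_eq_mul, zsmul_eq_mul]
    have hval : (((ZMod.val y : ℤ)) : ZMod (p ^ k)) = y := by
      push_cast
      exact ZMod.natCast_rightInverse y
    rw [hval]
    have hpc : ((p : ZMod (p ^ k)) ^ dd p k a) = c * a := by
      rw [← hc]; push_cast; ring
    push_cast
    calc ((p : ZMod (p ^ k)) ^ dd p k a) * (x' : ZMod (p ^ k)) * g
        = (x' : ZMod (p ^ k)) * (c * a) * g := by rw [hpc]; ring
      _ = y * a := by rw [hy]; ring

lemma adj_iff [NeZero (p ^ k)] (a b : ZMod (p ^ k)) :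
    (grpAnnGraph (ZMod (p ^ k))).Adj a b ↔ a ≠ b ∧ k ≤ dd p k a + dd p k b := by
  constructor
  · rintro ⟨hne, h⟩
    refine ⟨hne, ?_⟩
    have h1 := h ((p : ℤ) ^ dd p k a) ((mem_annIdeal_iff p k a _).2 dvd_rfl)
      ((p : ℤ) ^ dd p k b) ((mem_annIdeal_iff p k b _).2 dvd_rfl) 1
    rw [zsmul_eq_mul, mul_one] at h1
    have h2 : ((p ^ (dd p k a + dd p k b) : ℕ) : ZMod (p ^ k)) = 0 := by
      push_cast [pow_add] at h1 ⊢
      exact_mod_cast h1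
    have h3 := (ZMod.natCast_eq_zero_iff _ _).1 h2
    exact (Nat.pow_dvd_pow_iff_le_right hp.out.one_lt).1 h3
  · rintro ⟨hne, hsum⟩
    refine ⟨hne, ?_⟩
    intro x hx y hy g
    rw [mem_annIdeal_iff] at hx hy
    have hdvd : ((p ^ k : ℕ) : ℤ) ∣ x * y := by
      push_cast
      calc ((p : ℤ) ^ k) ∣ (p : ℤ) ^ (dd p k a + dd p k b) := pow_dvd_pow _ hsum
        _ = (p : ℤ) ^ dd p k a * (p : ℤ) ^ dd p k b := pow_add _ _ _
        _ ∣ x * y := mul_dvd_mul hx hy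
    have : ((x * y : ℤ) : ZMod (p ^ k)) = 0 :=
      (ZMod.intCast_zmod_eq_zero_iff_dvd _ _).2 (by exact_mod_cast hdvd)
    rw [zsmul_eq_mul, this, zero_mul]


noncomputable def SS (t : ℕ) : Finset (ZMod (p ^ k)) :=
  Finset.univ.filter (fun b => t ≤ dd p k b)

lemma card_SS {t : ℕ} (ht : t ≤ k) : (SS p k t).card = p ^ (k - t) := by
  classical
  haveI : NeZero (p ^ (k - t)) := ⟨pow_ne_zero _ hp.out.ne_zero⟩
  have hcard : Fintype.card (ZMod (p ^ (k - t))) = p ^ (k - t) := ZMod.card _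
  rw [← hcard]
  rw [← Finset.card_univ]
  refine (Finset.card_bij
    (fun (c : ZMod (p ^ (k-t))) (_ : c ∈ Finset.univ) => ((p ^ t * ZMod.val c : ℕ) : ZMod (p ^ k)))
    ?_ ?_ ?_).symm
  · intro c _
    simp only [SS, Finset.mem_filter, Finset.mem_univ, true_and]
    rw [← dvd_val_iff p k ht]
    have hlt : p ^ t * ZMod.val c < p ^ k := by
      have h1 : ZMod.val c < p ^ (k - t) := ZMod.val_lt c
      calc p ^ t * ZMod.val c < p ^ t * p ^ (k - t) := by
            exact (Nat.mul_lt_mul_left (Nat.pow_pos hp.out.pos)).2 h1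
        _ = p ^ k := by rw [← pow_add]; congr 1; omega
    rw [ZMod.val_natCast_of_lt hlt]
    exact Dvd.intro _ rfl
  · intro c1 _ c2 _ h
    have hlt : ∀ c : ZMod (p ^ (k-t)), p ^ t * ZMod.val c < p ^ k := by
      intro c
      have h1 : ZMod.val c < p ^ (k - t) := ZMod.val_lt c
      calc p ^ t * ZMod.val c < p ^ t * p ^ (k - t) :=
            (Nat.mul_lt_mul_left (Nat.pow_pos hp.out.pos)).2 h1
        _ = p ^ k := by rw [← pow_add]; congr 1; omega
    have := congrArg ZMod.val h
    rw [ZMod.val_natCast_of_lt (hlt c1), ZMod.val_natCast_of_lt (hlt c2)] at this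
    have hval : ZMod.val c1 = ZMod.val c2 :=
      Nat.eq_of_mul_eq_mul_left (Nat.pow_pos hp.out.pos) this
    exact ZMod.val_injective _ hval
  · intro b hb
    simp only [SS, Finset.mem_filter, Finset.mem_univ, true_and] at hb
    rw [← dvd_val_iff p k ht] at hb
    obtain ⟨c, hc⟩ := hb
    have hclt : c < p ^ (k - t) := by
      have := ZMod.val_lt b
      rw [hc] at this
      by_contra hcon
      push_neg at hcon
      have : p ^ t * p ^ (k-t) ≤ p ^ t * c := Nat.mul_le_mul_left _ hcon
      rw [← pow_add] at this
      have hkk : t + (k - t) = k := by omega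
      rw [hkk] at this
      omega
    refine ⟨((c : ℕ) : ZMod (p ^ (k - t))), Finset.mem_univ _, ?_⟩
    show ((p ^ t * ZMod.val ((c : ℕ) : ZMod (p ^ (k - t))) : ℕ) : ZMod (p ^ k)) = b
    rw [ZMod.val_natCast_of_lt hclt, ← hc]
    exact (ZMod.natCast_rightInverse b)

lemma thresh_sum {s t : ℕ} (hs : s ≤ k) (ht : t ≤ k) :
    ∑ b ∈ SS p k t, (if s ≤ dd p k b then (1:ℝ) else 0) = (p : ℝ) ^ (k - max s t) := by
  classical
  rw [Finset.sum_boole]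
  have : (SS p k t).filter (fun b => s ≤ dd p k b) = SS p k (max s t) := by
    ext b
    simp only [SS, Finset.mem_filter, Finset.mem_univ, true_and, max_le_iff]
    tauto
  rw [this, card_SS p k (by omega)]
  push_cast
  ring


lemma mem_SS {t : ℕ} (b : ZMod (p ^ k)) : b ∈ SS p k t ↔ t ≤ dd p k b := by
  simp [SS]

lemma adj_iff' (a b : ZMod (p ^ k)) :
    (grpAnnGraph (ZMod (p ^ k))).Adj a b ↔ b ∈ (SS p k (k - dd p k a)).erase a := by
  rw [adj_iff, Finset.mem_erase, mem_SS]
  have := dd_le p k a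
  have := dd_le p k b
  constructor
  · rintro ⟨h1, h2⟩; exact ⟨fun h => h1 h.symm, by omega⟩
  · rintro ⟨h1, h2⟩; exact ⟨fun h => h1 h.symm, by omega⟩

lemma row (w : ZMod (p ^ k) → ℝ) (a : ZMod (p ^ k)) :
    (lapMat (grpAnnGraph (ZMod (p ^ k)))).mulVec w a
      = (p : ℝ) ^ (dd p k a) * w a - ∑ b ∈ SS p k (k - dd p k a), w b := by
  classical
  have hns : (grpAnnGraph (ZMod (p ^ k))).neighborSet a
      = ↑((SS p k (k - dd p k a)).erase a) := by
    ext b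
    rw [SimpleGraph.mem_neighborSet, adj_iff']
    simp
    tauto
  have hncard : ((grpAnnGraph (ZMod (p ^ k))).neighborSet a).ncard
      = ((SS p k (k - dd p k a)).erase a).card := by
    rw [hns, Set.ncard_coe_finset]
  have hsplit : (lapMat (grpAnnGraph (ZMod (p ^ k)))).mulVec w a
      = (((SS p k (k - dd p k a)).erase a).card : ℝ) * w a
        + ∑ b ∈ Finset.univ, (if b ∈ (SS p k (k - dd p k a)).erase a then -(w b) else 0) := by
    rw [Matrix.mulVec, dotProduct]
    have : ∀ b, (lapMat (grpAnnGraph (ZMod (p ^ k)))) a b * w b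
        = (if a = b then (((SS p k (k - dd p k a)).erase a).card : ℝ) * w b else 0)
          + (if b ∈ (SS p k (k - dd p k a)).erase a then -(w b) else 0) := by
      intro b
      by_cases hab : a = b
      · subst hab
        have hne : a ∉ (SS p k (k - dd p k a)).erase a := Finset.notMem_erase a _
        simp [lapMat, hncard, hne]
      · by_cases hadj : (grpAnnGraph (ZMod (p ^ k))).Adj a b
        · have hmem : b ∈ (SS p k (k - dd p k a)).erase a := (adj_iff' p k a b).1 hadj
          simp [lapMat, hab, hadj, hmem]
        · have hmem : b ∉ (SS p k (k - dd p k a)).erase a :=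
            fun h => hadj ((adj_iff' p k a b).2 h)
          simp [lapMat, hab, hadj, hmem]
    rw [Finset.sum_congr rfl (fun b _ => this b), Finset.sum_add_distrib,
      Finset.sum_ite_eq]
    simp
  rw [hsplit]
  rw [Finset.sum_ite_mem, Finset.univ_inter, Finset.sum_neg_distrib]
  by_cases hmem : a ∈ SS p k (k - dd p k a)
  · rw [Finset.card_erase_of_mem hmem, Finset.sum_erase_eq_sub hmem]
    have hc := card_SS p k (t := k - dd p k a) (by omega)
    have hd := dd_le p k a
    have hk2 : k - (k - dd p k a) = dd p k a := by omega
    rw [hc, hk2] at *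
    have hpos : 1 ≤ p ^ dd p k a := Nat.one_le_pow _ _ hp.out.pos
    push_cast [Nat.cast_sub hpos]
    ring
  · rw [Finset.erase_eq_of_notMem hmem]
    have hc := card_SS p k (t := k - dd p k a) (by omega)
    have hd := dd_le p k a
    have hk2 : k - (k - dd p k a) = dd p k a := by omega
    rw [hc, hk2]
    push_cast
    ring


/-- the `i`-th eigen-row function. -/
noncomputable def FF (i j : ℕ) : ℝ :=
  if i = k / 2 then 1
  else if i = k then (p:ℝ)^k * (if k ≤ j then 1 else 0) - 1
  else if i < k / 2 then
    (1 - (p:ℝ)^(k-1-2*i)) * ((if i ≤ j then (1:ℝ) else 0) - (if i+1 ≤ j then 1 else 0))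
    + ((p:ℝ) - 1) * (p:ℝ)^(k-1-2*i) *
        ((if i+1 ≤ j then (1:ℝ) else 0) - (if k-i ≤ j then 1 else 0))
  else
    ((p:ℝ)^(k-i-1) - (p:ℝ)^(k-i)) *
        ((if k-i ≤ j then (1:ℝ) else 0) - (if i ≤ j then 1 else 0))
    + ((p:ℝ)^i - (p:ℝ)^(k-i)) * ((if i ≤ j then (1:ℝ) else 0) - (if i+1 ≤ j then 1 else 0))

/-- the `i`-th eigenvalue. -/
noncomputable def ev (i : ℕ) : ℝ := if i = k / 2 then 0 else (p:ℝ)^i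

lemma sumFF (hk : 1 ≤ k) {i : ℕ} (hi : i ≤ k) {j : ℕ} (hj : j ≤ k) :
    ∑ b ∈ SS p k (k - j), FF p k i (dd p k b) = ((p:ℝ)^j - ev p k i) * FF p k i j := by
  have hm2 : 2 * (k / 2) ≤ k := by omega
  have hm2' : k ≤ 2 * (k / 2) + 1 := by omega
  have hkj : k - (k - j) = j := by omega
  by_cases h1 : i = k / 2
  · -- constant row, eigenvalue 0
    simp only [FF, ev, if_pos h1]
    rw [Finset.sum_const, card_SS p k (t := k - j) (by omega)]
    push_cast
    rw [hkj]
    ring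
  by_cases h2 : i = k
  · -- the p^k row
    simp only [FF, ev, if_neg h1, if_pos h2]
    rw [h2]
    have hsum : ∀ b, (p:ℝ)^k * (if k ≤ dd p k b then (1:ℝ) else 0) - 1
        = (p:ℝ)^k * (if k ≤ dd p k b then (1:ℝ) else 0) - (if 0 ≤ dd p k b then (1:ℝ) else 0) := by
      intro b; simp
    rw [Finset.sum_congr rfl (fun b _ => hsum b), Finset.sum_sub_distrib, ← Finset.mul_sum,
      thresh_sum p k le_rfl (by omega), thresh_sum p k (Nat.zero_le k) (by omega)]
    have hmax1 : max k (k - j) = k := by omega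
    have hmax2 : max 0 (k - j) = k - j := by omega
    rw [hmax1, hmax2, hkj, Nat.sub_self, pow_zero]
    by_cases hjk : k ≤ j
    · have hje : j = k := by omega
      rw [if_pos hjk, hje]
      ring
    · rw [if_neg hjk]
      ring
  by_cases h3 : i < k / 2
  · -- small family
    have hc : 2 * i + 2 ≤ k := by omega
    simp only [FF, ev, if_neg h1, if_neg h2, if_pos h3]
    rw [Finset.sum_add_distrib, ← Finset.mul_sum, ← Finset.mul_sum,
      Finset.sum_sub_distrib, Finset.sum_sub_distrib,
      thresh_sum p k (s := i) (by omega) (by omega),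
      thresh_sum p k (s := i + 1) (by omega) (by omega),
      thresh_sum p k (s := k - i) (by omega) (by omega)]
    rcases lt_trichotomy j i with hji | hji | hji
    · -- j < i
      have e1 : max i (k - j) = k - j := by omega
      have e2 : max (i+1) (k - j) = k - j := by omega
      have e3 : max (k-i) (k - j) = k - j := by omega
      rw [e1, e2, e3, hkj, if_neg (by omega), if_neg (by omega), if_neg (by omega)]
      ring
    · -- j = i
      subst hji
      have e1 : max j (k - j) = k - j := by omega
      have e2 : max (j+1) (k - j) = k - j := by omega
      have e3 : max (k-j) (k - j) = k - j := by omega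
      rw [e1, e2, e3, hkj, if_pos (by omega), if_neg (by omega), if_neg (by omega)]
      ring
    · by_cases hjj : k - i ≤ j
      · -- top zone
        have e1 : max i (k - j) = i := by omega
        have e2 : max (i+1) (k - j) = i + 1 := by omega
        have e3 : max (k-i) (k - j) = k - i := by omega
        rw [e1, e2, e3, if_pos (by omega), if_pos (by omega), if_pos (by omega)]
        have g1 : k - (k - i) = i := by omega
        rw [g1]
        have hX : (p:ℝ)^(k - (i+1)) = (p:ℝ)^(k-1-2*i) * (p:ℝ)^i := by
          rw [← pow_add]; congr 1; omega
        have hY : (p:ℝ)^(k - i) = (p:ℝ)^(k-1-2*i) * (p:ℝ)^i * (p:ℝ) := by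
          rw [mul_assoc, ← pow_succ, ← pow_add]; congr 1; omega
        rw [hX, hY]
        ring
      · -- middle zone i < j ≤ k-1-i
        have e1 : max i (k - j) = k - j := by omega
        have e2 : max (i+1) (k - j) = k - j := by omega
        have e3 : max (k-i) (k - j) = k - i := by omega
        rw [e1, e2, e3, hkj, if_pos (by omega), if_pos (by omega), if_neg (by omega)]
        have g1 : k - (k - i) = i := by omega
        rw [g1]
        ring
  · -- large family
    have hc : k + 1 ≤ 2 * i := by omega
    have hik : i < k := by omega
    simp only [FF, ev, if_neg h1, if_neg h2, if_neg h3]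
    rw [Finset.sum_add_distrib, ← Finset.mul_sum, ← Finset.mul_sum,
      Finset.sum_sub_distrib, Finset.sum_sub_distrib,
      thresh_sum p k (s := k - i) (by omega) (by omega),
      thresh_sum p k (s := i) (by omega) (by omega),
      thresh_sum p k (s := i + 1) (by omega) (by omega)]
    by_cases hj1 : j < k - i
    · have e1 : max (k-i) (k - j) = k - j := by omega
      have e2 : max i (k - j) = k - j := by omega
      have e3 : max (i+1) (k - j) = k - j := by omega
      rw [e1, e2, e3, hkj, if_neg (by omega), if_neg (by omega), if_neg (by omega)]
      ring
    · by_cases hj2 : j < i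
      · have e1 : max (k-i) (k - j) = k - j := by omega
        have e2 : max i (k - j) = i := by omega
        have e3 : max (i+1) (k - j) = i + 1 := by omega
        rw [e1, e2, e3, hkj, if_pos (by omega), if_neg (by omega), if_neg (by omega)]
        have g1 : k - (i + 1) = k - i - 1 := by omega
        rw [g1]
        ring
      · -- i ≤ j
        have e1 : max (k-i) (k - j) = k - i := by omega
        have e2 : max i (k - j) = i := by omega
        have e3 : max (i+1) (k - j) = i + 1 := by omega
        rw [e1, e2, e3, if_pos (by omega), if_pos (by omega)]
        have g1 : k - (k - i) = i := by omega
        have g2 : k - (i + 1) = k - i - 1 := by omega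
        rw [g1, g2]
        by_cases hj3 : i + 1 ≤ j
        · rw [if_pos hj3]; ring
        · rw [if_neg hj3]
          have : j = i := by omega
          subst this
          ring

lemma eigen (hk : 1 ≤ k) {i : ℕ} (hi : i ≤ k) :
    (lapMat (grpAnnGraph (ZMod (p ^ k)))).mulVec (fun a => FF p k i (dd p k a))
      = ev p k i • (fun a => FF p k i (dd p k a)) := by
  funext a
  rw [row, sumFF p k hk hi (dd_le p k a)]
  simp only [Pi.smul_apply, smul_eq_mul]
  ring

lemma one_lt_p : 1 < (p : ℝ) := by exact_mod_cast hp.out.one_lt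

lemma FF_self_ne_zero {i : ℕ} (hi : i ≤ k) : FF p k i i ≠ 0 := by
  have hp1 : 1 < (p : ℝ) := one_lt_p p
  have hm2 : 2 * (k / 2) ≤ k := by omega
  have hm2' : k ≤ 2 * (k / 2) + 1 := by omega
  by_cases h1 : i = k / 2
  · simp [FF, h1]
  by_cases h2 : i = k
  · have hval : FF p k i i = (p:ℝ)^k - 1 := by
      simp only [FF, if_neg h1, if_pos h2]
      rw [if_pos (by omega : k ≤ i)]
      ring
    rw [hval]
    have : (1:ℝ) < (p:ℝ)^k := one_lt_pow₀ hp1 (by omega)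
    intro hcon
    nlinarith
  by_cases h3 : i < k / 2
  · have hval : FF p k i i = 1 - (p:ℝ)^(k-1-2*i) := by
      simp only [FF, if_neg h1, if_neg h2, if_pos h3]
      rw [if_pos (le_refl i), if_neg (by omega : ¬ i + 1 ≤ i), if_neg (by omega : ¬ k - i ≤ i)]
      ring
    rw [hval]
    have : (1:ℝ) < (p:ℝ)^(k-1-2*i) := one_lt_pow₀ hp1 (by omega)
    intro hcon
    nlinarith
  · have hval : FF p k i i = (p:ℝ)^i - (p:ℝ)^(k-i) := by
      simp only [FF, if_neg h1, if_neg h2, if_neg h3]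
      rw [if_pos (by omega : k - i ≤ i), if_pos (le_refl i), if_neg (by omega : ¬ i + 1 ≤ i)]
      ring
    rw [hval]
    have : (p:ℝ)^(k-i) < (p:ℝ)^i := by
      apply pow_lt_pow_right₀ hp1
      omega
    intro hcon
    nlinarith

lemma ev_mem {i : ℕ} (hi : i ≤ k) :
    ev p k i = 0 ∨ ∃ t ≤ k, ev p k i = (p:ℝ)^t := by
  by_cases h : i = k / 2
  · left; simp [ev, h]
  · right; exact ⟨i, hi, by simp [ev, h]⟩

lemma ev_injective : Function.Injective (fun i : Fin (k+1) => ev p k i.1) := by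
  have hp1 : 1 < (p : ℝ) := one_lt_p p
  intro i j h
  simp only [ev] at h
  have hpow : ∀ t : ℕ, (0:ℝ) < (p:ℝ)^t := fun t => pow_pos (by linarith) t
  split_ifs at h with hi hj hj
  · apply Fin.ext; rw [hi, hj]
  · exact absurd h.symm (ne_of_gt (hpow j))
  · exact absurd h (ne_of_gt (hpow i))
  · have hnat : p ^ (i : ℕ) = p ^ (j : ℕ) := by exact_mod_cast h
    exact Fin.ext (Nat.pow_right_injective hp.out.two_le hnat)


lemma lap_symm : (lapMat (grpAnnGraph (ZMod (p ^ k))))ᵀ = lapMat (grpAnnGraph (ZMod (p ^ k))) := by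
  ext a b
  simp only [Matrix.transpose_apply, lapMat, Matrix.of_apply]
  by_cases hab : a = b
  · subst hab; rfl
  · rw [if_neg (fun h => hab h.symm), if_neg hab]
    by_cases hadj : (grpAnnGraph (ZMod (p ^ k))).Adj a b
    · rw [if_pos hadj, if_pos (hadj.symm)]
    · rw [if_neg hadj, if_neg (fun h => hadj h.symm)]

lemma dot_sym (v w : ZMod (p ^ k) → ℝ) :
    v ⬝ᵥ ((lapMat (grpAnnGraph (ZMod (p ^ k)))) *ᵥ w)
      = ((lapMat (grpAnnGraph (ZMod (p ^ k)))) *ᵥ v) ⬝ᵥ w := by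
  rw [Matrix.dotProduct_mulVec, ← Matrix.mulVec_transpose, lap_symm]

lemma mem_spec_of_eigen {μ : ℝ} {w : ZMod (p ^ k) → ℝ} (hw : w ≠ 0)
    (he : (lapMat (grpAnnGraph (ZMod (p ^ k)))) *ᵥ w = μ • w) :
    μ ∈ spectrum ℝ (lapMat (grpAnnGraph (ZMod (p ^ k)))) := by
  rw [spectrum.mem_iff]
  intro hu
  have hdet := (Matrix.isUnit_iff_isUnit_det _).1 hu
  have hzero : (algebraMap ℝ (Matrix (ZMod (p ^ k)) (ZMod (p ^ k)) ℝ) μ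
      - lapMat (grpAnnGraph (ZMod (p ^ k)))) *ᵥ w = 0 := by
    rw [Matrix.sub_mulVec, he, Algebra.algebraMap_eq_smul_one,
      Matrix.smul_mulVec, Matrix.one_mulVec, sub_self]
  have hdet0 := Matrix.exists_mulVec_eq_zero_iff.1 ⟨w, hw, hzero⟩
  rw [hdet0] at hdet
  exact (not_isUnit_zero : ¬ IsUnit (0:ℝ)) hdet

lemma eigen_of_mem_spec {μ : ℝ}
    (hμ : μ ∈ spectrum ℝ (lapMat (grpAnnGraph (ZMod (p ^ k))))) :
    ∃ w : ZMod (p ^ k) → ℝ, w ≠ 0 ∧ (lapMat (grpAnnGraph (ZMod (p ^ k)))) *ᵥ w = μ • w := by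
  rw [spectrum.mem_iff] at hμ
  have hdet : (algebraMap ℝ (Matrix (ZMod (p ^ k)) (ZMod (p ^ k)) ℝ) μ
      - lapMat (grpAnnGraph (ZMod (p ^ k)))).det = 0 := by
    by_contra h
    exact hμ ((Matrix.isUnit_iff_isUnit_det _).2 (isUnit_iff_ne_zero.2 h))
  obtain ⟨w, hw, hzero⟩ := Matrix.exists_mulVec_eq_zero_iff.2 hdet
  refine ⟨w, hw, ?_⟩
  rw [Matrix.sub_mulVec, Algebra.algebraMap_eq_smul_one,
    Matrix.smul_mulVec, Matrix.one_mulVec, sub_eq_zero] at hzero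
  exact hzero.symm

lemma main_subset (hk : 1 ≤ k) {μ : ℝ}
    (hμ : μ ∈ spectrum ℝ (lapMat (grpAnnGraph (ZMod (p ^ k))))) :
    μ = 0 ∨ ∃ i ≤ k, μ = (p : ℝ) ^ i := by
  by_contra hcon
  push_neg at hcon
  obtain ⟨hμ0, hμp⟩ := hcon
  obtain ⟨v, hv0, hveq⟩ := eigen_of_mem_spec p k hμ
  set L := lapMat (grpAnnGraph (ZMod (p ^ k))) with hL
  -- the family of Q-eigen-rows
  set G : Fin (k+1) → (Fin (k+1) → ℝ) := fun i j => FF p k i.1 j.1 with hG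
  set Dfin : ZMod (p ^ k) → Fin (k+1) := fun a => ⟨dd p k a, by
    have := dd_le p k a; omega⟩ with hDfin
  have hμne : ∀ i : Fin (k+1), μ ≠ ev p k i.1 := by
    intro i heq
    rcases ev_mem p k (by omega : i.1 ≤ k) with h | ⟨t, ht, h⟩
    · exact hμ0 (heq.trans h)
    · exact hμp t ht (heq.trans h)
  -- lifted eigenvectors are nonzero
  have hlift_ne : ∀ i : Fin (k+1), (fun a => FF p k i.1 (dd p k a)) ≠ 0 := by
    intro i hzero
    obtain ⟨a, ha⟩ := dd_surj p k (by omega : i.1 ≤ k)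
    have := congrFun hzero a
    rw [ha] at this
    exact FF_self_ne_zero p k (by omega : i.1 ≤ k) this
  -- orthogonality
  have horth : ∀ i : Fin (k+1), (∑ a, v a * FF p k i.1 (dd p k a)) = 0 := by
    intro i
    set w : ZMod (p ^ k) → ℝ := fun a => FF p k i.1 (dd p k a) with hw
    have heig : L *ᵥ w = ev p k i.1 • w := eigen p k hk (by omega : i.1 ≤ k)
    have hdot : μ * (v ⬝ᵥ w) = ev p k i.1 * (v ⬝ᵥ w) := by
      calc μ * (v ⬝ᵥ w) = (μ • v) ⬝ᵥ w := by rw [smul_dotProduct, smul_eq_mul]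
        _ = (L *ᵥ v) ⬝ᵥ w := by rw [hveq]
        _ = v ⬝ᵥ (L *ᵥ w) := (dot_sym p k v w).symm
        _ = v ⬝ᵥ (ev p k i.1 • w) := by rw [heig]
        _ = ev p k i.1 * (v ⬝ᵥ w) := by rw [dotProduct_smul, smul_eq_mul]
    have : (μ - ev p k i.1) * (v ⬝ᵥ w) = 0 := by linarith
    have hfac : v ⬝ᵥ w = 0 := by
      rcases mul_eq_zero.1 this with h | h
      · exact absurd (sub_eq_zero.1 h) (hμne i)
      · exact h
    simpa [dotProduct, hw] using hfac
  -- linear independence of rows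
  have hindep : LinearIndependent ℝ G := by
    apply LinearIndependent.of_comp (LinearMap.funLeft ℝ ℝ Dfin)
    have hcomp : (⇑(LinearMap.funLeft ℝ ℝ Dfin) ∘ G)
        = fun i : Fin (k+1) => (fun a => FF p k i.1 (dd p k a)) := rfl
    rw [hcomp]
    apply Module.End.eigenvectors_linearIndependent' (Matrix.mulVecLin L)
      (fun i : Fin (k+1) => ev p k i.1) (ev_injective p k)
    intro i
    constructor
    · rw [Module.End.mem_eigenspace_iff, Matrix.mulVecLin_apply]
      exact eigen p k hk (by omega : i.1 ≤ k)
    · exact hlift_ne i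
  -- basis
  have hcard : Fintype.card (Fin (k+1)) = Module.finrank ℝ (Fin (k+1) → ℝ) := by
    simp
  let B := basisOfLinearIndependentOfCardEqFinrank hindep hcard
  have hB : ⇑B = G := coe_basisOfLinearIndependentOfCardEqFinrank _ _
  -- fiber sums
  set z : Fin (k+1) → ℝ := fun t => ∑ a ∈ Finset.univ.filter (fun a => Dfin a = t), v a with hz
  let φ : (Fin (k+1) → ℝ) →ₗ[ℝ] ℝ :=
    { toFun := fun u => ∑ t, u t * z t
      map_add' := by intro u1 u2; simp [add_mul, Finset.sum_add_distrib]
      map_smul' := by intro c u; simp [Finset.mul_sum]; apply Finset.sum_congr rfl; intros; ring }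
  have hφG : ∀ i, φ (G i) = 0 := by
    intro i
    have key : ∀ t : Fin (k+1), G i t * (∑ a ∈ Finset.univ.filter (fun a => Dfin a = t), v a)
        = ∑ a ∈ Finset.univ.filter (fun a => Dfin a = t), v a * FF p k i.1 (dd p k a) := by
      intro t
      rw [Finset.mul_sum]
      refine Finset.sum_congr rfl (fun a ha => ?_)
      have hat : Dfin a = t := (Finset.mem_filter.1 ha).2
      have hdd : dd p k a = t.1 := congrArg Fin.val hat
      simp only [hG]
      rw [hdd]
      ring
    have h0 : φ (G i) = ∑ t, G i t * z t := rfl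
    rw [h0]
    simp only [hz]
    rw [Finset.sum_congr rfl (fun t _ => key t), Finset.sum_fiberwise]
    exact horth i
  have hφ0 : φ = 0 := by
    apply Module.Basis.ext B
    intro i
    rw [hB]
    rw [hφG i]
    rfl
  have hz0 : ∀ t, z t = 0 := by
    intro t
    have h1 : φ (Pi.single t (1:ℝ)) = ∑ s, (Pi.single t (1:ℝ) : Fin (k+1) → ℝ) s * z s := rfl
    have h2 : ∑ s, (Pi.single t (1:ℝ) : Fin (k+1) → ℝ) s * z s = z t := by
      rw [Finset.sum_eq_single t]
      · simp
      · intro s _ hs; simp [Pi.single_apply, hs]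
      · intro habs; exact absurd (Finset.mem_univ t) habs
    rw [hφ0] at h1
    rw [← h2, ← h1]
    simp
  -- constancy on classes
  have hconst : ∀ a b : ZMod (p ^ k), dd p k a = dd p k b → v a = v b := by
    intro a b hab
    have ha := congrFun hveq a
    have hb := congrFun hveq b
    rw [row] at ha hb
    simp only [Pi.smul_apply, smul_eq_mul] at ha hb
    rw [hab] at ha
    have hsub : ((p:ℝ)^(dd p k b) - μ) * (v a - v b) = 0 := by
      have : (p:ℝ)^(dd p k b) * v a - (p:ℝ)^(dd p k b) * v b = μ * v a - μ * v b := by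
        linarith
      ring_nf
      ring_nf at this
      linarith
    rcases mul_eq_zero.1 hsub with h | h
    · exact absurd (sub_eq_zero.1 h).symm (hμp (dd p k b) (dd_le p k b))
    · linarith [sub_eq_zero.1 h]
  -- conclude v = 0
  apply hv0
  funext a
  have hzsum : (∑ b ∈ Finset.univ.filter (fun b => Dfin b = Dfin a), v b) = 0 := hz0 (Dfin a)
  have hsum2 : (∑ b ∈ Finset.univ.filter (fun b => Dfin b = Dfin a), v b)
      = (((Finset.univ.filter (fun b => Dfin b = Dfin a)).card : ℝ)) * v a := by
    calc ∑ b ∈ Finset.univ.filter (fun b => Dfin b = Dfin a), v b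
        = ∑ _b ∈ Finset.univ.filter (fun b => Dfin b = Dfin a), v a :=
          Finset.sum_congr rfl (fun b hb =>
            hconst b a (congrArg Fin.val (Finset.mem_filter.1 hb).2))
      _ = _ := by rw [Finset.sum_const, nsmul_eq_mul]
  have hmem : a ∈ Finset.univ.filter (fun b => Dfin b = Dfin a) := by simp
  have hcard0 : (((Finset.univ.filter (fun b => Dfin b = Dfin a)).card : ℝ)) ≠ 0 :=
    Nat.cast_ne_zero.2 (Finset.card_pos.2 ⟨a, hmem⟩).ne'
  have hmul := hsum2.symm.trans hzsum
  have hva : v a = 0 := by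
    rcases mul_eq_zero.1 hmul with h | h
    · exact absurd h hcard0
    · exact h
  simpa using hva


end LapAux

/-- For any prime `p` and `k ≥ 1`, every Laplacian eigenvalue of
`Γ(ℤ/p^kℤ)` lies in `{0} ∪ {p^i : 0 ≤ i ≤ k}`, and moreover `0` and `p^k` are
Laplacian eigenvalues. -/
theorem lap_spectrum_grpAnnGraph_subset (p k : ℕ) [Fact p.Prime] (hk : 1 ≤ k) :
    (∀ μ : ℝ, μ ∈ spectrum ℝ (lapMat (grpAnnGraph (ZMod (p ^ k)))) →
        μ = 0 ∨ ∃ i ≤ k, μ = (p : ℝ) ^ i) ∧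
    (0 : ℝ) ∈ spectrum ℝ (lapMat (grpAnnGraph (ZMod (p ^ k)))) ∧
    ((p : ℝ) ^ k) ∈ spectrum ℝ (lapMat (grpAnnGraph (ZMod (p ^ k)))) := by
  haveI : NeZero (p ^ k) := ⟨pow_ne_zero _ (Fact.out : p.Prime).ne_zero⟩
  refine ⟨fun μ hμ => LapAux.main_subset p k hk hμ, ?_, ?_⟩
  · -- 0 is an eigenvalue, via the constant row i = k / 2
    apply LapAux.mem_spec_of_eigen p k
      (w := fun a => LapAux.FF p k (k / 2) (LapAux.dd p k a))
    · intro h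
      have h0 := congrFun h 0
      simp only [LapAux.FF, if_pos rfl, Pi.zero_apply] at h0
      exact one_ne_zero h0
    · rw [LapAux.eigen p k hk (by omega : k / 2 ≤ k)]
      rw [show LapAux.ev p k (k / 2) = 0 by simp [LapAux.ev]]
  · -- p ^ k is an eigenvalue, via the row i = k
    have hkm : ¬ (k = k / 2) := by omega
    apply LapAux.mem_spec_of_eigen p k
      (w := fun a => LapAux.FF p k k (LapAux.dd p k a))
    · intro h
      have h0 := congrFun h 0
      rw [LapAux.dd_zero p k] at h0
      exact LapAux.FF_self_ne_zero p k le_rfl h0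
    · rw [LapAux.eigen p k hk (le_refl k)]
      rw [show LapAux.ev p k k = (p:ℝ)^k by simp [LapAux.ev, hkm]]
end
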